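/- Let G = (V, E) be a finite undirected graph and E' an orientation of E (for each {u,v} ∈ E, exactly one of (u,v), (v,u) is in E'). Let T be the DL-Lite_core TBox consisting of the axioms ∃s_i ⊓ ∃t_j ⊑ ⊥ for all s, t ∈ {r, g, b} with s ≠ t and all i, j ∈ {1, 2}, and ∃s_1^- ⊓ ∃s_2^- ⊑ ⊥ for all s ∈ {r, g, b}. Let A_G contain, for each e = (u,v) ∈ E' and each s ∈ {r, g, b}, the assertions s_1(u, e) and s_2(v, e). Let ω assign weight ∞ to every axiom of T and weight 1 to every assertion of A_G. Then G is 3-colourable if and only if (T, A_G)_ω is 4|E|-satisfiable. -/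

import Mathlib

namespace DL

/-! ### Syntax -/

abbrev IndName := ℕ
abbrev CName := ℕ
abbrev RName := ℕ

/-- Roles: role names and inverse roles. -/
inductive Role where
  | name : RName → Role
  | inv  : RName → Role
deriving DecidableEq

/-- `ALCHIO` concepts. -/
inductive Concept where
  | top  : Concept
  | bot  : Concept
  | atom : CName → Concept
  | nom  : IndName → Concept
  | neg  : Concept → Concept
  | conj : Concept → Concept → Concept
  | ex   : Role → Concept → Concept
deriving DecidableEq

/-- TBox axioms: concept inclusions and role inclusions. -/
inductive Axiom where
  | ci : Concept → Concept → Axiom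
  | ri : Role → Role → Axiom
deriving DecidableEq

/-- ABox assertions. -/
inductive Assertion where
  | ca : CName → IndName → Assertion
  | ra : RName → IndName → IndName → Assertion
deriving DecidableEq

/-! ### Interpretations -/

/-- A DL interpretation with domain a subset of a universe `U`.  Individual names are
interpreted via `indI` (under the standard names assumption, the individual names of the
ABox under consideration are interpreted "as themselves", i.e. injectively). -/
structure Interp (U : Type) where
  dom : Set U
  indI : IndName → U
  cI : CName → Set U
  rI : RName → Set (U × U)
  cI_sub : ∀ A, cI A ⊆ dom
  rI_sub : ∀ r p, p ∈ rI r → p.1 ∈ dom ∧ p.2 ∈ dom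

variable {U : Type}

/-- Every individual name denotes an element of the domain. -/
def Interp.Proper (I : Interp U) : Prop := ∀ a, I.indI a ∈ I.dom

def Role.interp (I : Interp U) : Role → Set (U × U)
  | Role.name r => I.rI r
  | Role.inv r  => {p | (p.2, p.1) ∈ I.rI r}

def Concept.interp (I : Interp U) : Concept → Set U
  | Concept.top => I.dom
  | Concept.bot => ∅
  | Concept.atom A => I.cI A
  | Concept.nom a => {I.indI a} ∩ I.dom
  | Concept.neg C => I.dom \ Concept.interp I C
  | Concept.conj C D => Concept.interp I C ∩ Concept.interp I D
  | Concept.ex r C => {d | ∃ e, (d, e) ∈ Role.interp I r ∧ e ∈ Concept.interp I C}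

def Assertion.sat (I : Interp U) : Assertion → Prop
  | Assertion.ca A a => I.indI a ∈ I.cI A
  | Assertion.ra r a b => (I.indI a, I.indI b) ∈ I.rI r

/-! ### Violations and cost -/

/-- Violations of a concept inclusion `C ⊑ D`. -/
def vioCI (I : Interp U) (C D : Concept) : Set U :=
  Concept.interp I C \ Concept.interp I D

/-- Violations of a role inclusion `r ⊑ s`. -/
def vioRI (I : Interp U) (r s : Role) : Set (U × U) :=
  Role.interp I r \ Role.interp I s

/-- The number of violations of an axiom. -/
noncomputable def Axiom.vioCount (I : Interp U) : Axiom → ℕ∞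
  | Axiom.ci C D => (vioCI I C D).encard
  | Axiom.ri r s => (vioRI I r s).encard

open Classical in
/-- The cost of an interpretation w.r.t. a weighted knowledge base `(T, A)` with weight
functions `wT` (on TBox axioms) and `wA` (on ABox assertions). -/
noncomputable def cost (T : Finset Axiom) (A : Finset Assertion)
    (wT : Axiom → ℕ∞) (wA : Assertion → ℕ∞) (I : Interp U) : ℕ∞ :=
  (∑ τ ∈ T, wT τ * Axiom.vioCount I τ) +
    ∑ α ∈ A, (if Assertion.sat I α then 0 else wA α)

/-! ### Queries -/

inductive Term where
  | var : ℕ → Term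
  | ind : IndName → Term
deriving DecidableEq

inductive QAtom where
  | ca : CName → Term → QAtom
  | ra : RName → Term → Term → QAtom
deriving DecidableEq

/-- A Boolean conjunctive query: a finite set of atoms, all of whose variables are
(implicitly) existentially quantified. -/
abbrev BCQ := Finset QAtom

def Term.eval (I : Interp U) (π : ℕ → U) : Term → U
  | Term.var v => π v
  | Term.ind a => I.indI a

def QAtom.sat (I : Interp U) (π : ℕ → U) : QAtom → Prop
  | QAtom.ca A t => Term.eval I π t ∈ I.cI A
  | QAtom.ra r t t' => (Term.eval I π t, Term.eval I π t') ∈ I.rI r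

/-- Satisfaction of a BCQ in an interpretation. -/
def satQ (I : Interp U) (q : BCQ) : Prop :=
  ∃ π : ℕ → U, (∀ v, π v ∈ I.dom) ∧ ∀ a ∈ q, QAtom.sat I π a

/-- An instance query is a BCQ with a single atom. -/
def IsIQ (q : BCQ) : Prop := ∃ a : QAtom, q = {a}

/-! ### Cost-based semantics -/

/-- `k`-satisfiability: some interpretation has cost at most `k`. -/
def ksat (T : Finset Axiom) (A : Finset Assertion)
    (wT : Axiom → ℕ∞) (wA : Assertion → ℕ∞) (k : ℕ) : Prop :=
  ∃ (U : Type) (I : Interp U), I.Proper ∧ cost T A wT wA I ≤ (k : ℕ∞)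

/-- `K ⊨ₚᵏ q`: some interpretation of cost at most `k` satisfies `q`. -/
def satP (T : Finset Axiom) (A : Finset Assertion)
    (wT : Axiom → ℕ∞) (wA : Assertion → ℕ∞) (k : ℕ) (q : BCQ) : Prop :=
  ∃ (U : Type) (I : Interp U), I.Proper ∧ cost T A wT wA I ≤ (k : ℕ∞) ∧ satQ I q

/-- `K ⊨꜀ᵏ q`: every interpretation of cost at most `k` satisfies `q`. -/
def satC (T : Finset Axiom) (A : Finset Assertion)
    (wT : Axiom → ℕ∞) (wA : Assertion → ℕ∞) (k : ℕ) (q : BCQ) : Prop :=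
  ∀ (U : Type) (I : Interp U), I.Proper → cost T A wT wA I ≤ (k : ℕ∞) → satQ I q

/-- The optimal cost of a weighted knowledge base. -/
noncomputable def optCost (T : Finset Axiom) (A : Finset Assertion)
    (wT : Axiom → ℕ∞) (wA : Assertion → ℕ∞) : ℕ∞ :=
  sInf {c : ℕ∞ | ∃ (U : Type) (I : Interp U), I.Proper ∧ cost T A wT wA I = c}

/-- `K ⊨ₚᵒᵖᵗ q`: some interpretation of optimal cost satisfies `q`. -/
noncomputable def satPopt (T : Finset Axiom) (A : Finset Assertion)
    (wT : Axiom → ℕ∞) (wA : Assertion → ℕ∞) (q : BCQ) : Prop :=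
  ∃ (U : Type) (I : Interp U), I.Proper ∧ cost T A wT wA I = optCost T A wT wA ∧ satQ I q

/-- `K ⊨꜀ᵒᵖᵗ q`: every interpretation of optimal cost satisfies `q`. -/
noncomputable def satCopt (T : Finset Axiom) (A : Finset Assertion)
    (wT : Axiom → ℕ∞) (wA : Assertion → ℕ∞) (q : BCQ) : Prop :=
  ∀ (U : Type) (I : Interp U), I.Proper → cost T A wT wA I = optCost T A wT wA → satQ I q

/-! ### Occurrences of symbols -/

def Role.base : Role → RName
  | Role.name r => r
  | Role.inv r => r

def Concept.cnames : Concept → Finset CName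
  | Concept.atom A => {A}
  | Concept.neg C => C.cnames
  | Concept.conj C D => C.cnames ∪ D.cnames
  | Concept.ex _ C => C.cnames
  | _ => ∅

def Concept.rnames : Concept → Finset RName
  | Concept.neg C => C.rnames
  | Concept.conj C D => C.rnames ∪ D.rnames
  | Concept.ex r C => insert r.base C.rnames
  | _ => ∅

def Concept.indNames : Concept → Finset IndName
  | Concept.nom a => {a}
  | Concept.neg C => C.indNames
  | Concept.conj C D => C.indNames ∪ D.indNames
  | Concept.ex _ C => C.indNames
  | _ => ∅

def Axiom.cnames : Axiom → Finset CName
  | Axiom.ci C D => C.cnames ∪ D.cnames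
  | Axiom.ri _ _ => ∅

def Axiom.rnames : Axiom → Finset RName
  | Axiom.ci C D => C.rnames ∪ D.rnames
  | Axiom.ri r s => {r.base, s.base}

def Axiom.indNames : Axiom → Finset IndName
  | Axiom.ci C D => C.indNames ∪ D.indNames
  | Axiom.ri _ _ => ∅

def Assertion.cnames : Assertion → Finset CName
  | Assertion.ca A _ => {A}
  | Assertion.ra _ _ _ => ∅

def Assertion.rnames : Assertion → Finset RName
  | Assertion.ca _ _ => ∅
  | Assertion.ra r _ _ => {r}

def Assertion.indNames : Assertion → Finset IndName
  | Assertion.ca _ a => {a}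
  | Assertion.ra _ a b => {a, b}

/-- The individual names occurring in an ABox. -/
def aboxInds (A : Finset Assertion) : Finset IndName := A.biUnion Assertion.indNames

/-- The individual names occurring in a KB. -/
def kbInds (T : Finset Axiom) (A : Finset Assertion) : Finset IndName :=
  T.biUnion Axiom.indNames ∪ aboxInds A

def Term.indNames : Term → Finset IndName
  | Term.var _ => ∅
  | Term.ind a => {a}

def QAtom.indNames : QAtom → Finset IndName
  | QAtom.ca _ t => t.indNames
  | QAtom.ra _ t t' => t.indNames ∪ t'.indNames

def QAtom.cnames : QAtom → Finset CName
  | QAtom.ca A _ => {A}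
  | QAtom.ra _ _ _ => ∅

def qInds (q : BCQ) : Finset IndName := q.biUnion QAtom.indNames

def qCnames (q : BCQ) : Finset CName := q.biUnion QAtom.cnames

/-! ### Sizes -/

def Concept.size : Concept → ℕ
  | Concept.top => 1
  | Concept.bot => 1
  | Concept.atom _ => 1
  | Concept.nom _ => 1
  | Concept.neg C => C.size + 1
  | Concept.conj C D => C.size + D.size + 1
  | Concept.ex _ C => C.size + 2

def Axiom.size : Axiom → ℕ
  | Axiom.ci C D => C.size + D.size + 1
  | Axiom.ri _ _ => 3

def Assertion.size : Assertion → ℕ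
  | Assertion.ca _ _ => 2
  | Assertion.ra _ _ _ => 3

def tboxSize (T : Finset Axiom) : ℕ := ∑ τ ∈ T, τ.size

def aboxSize (A : Finset Assertion) : ℕ := ∑ α ∈ A, α.size

/-! ### DL-Lite fragments -/

/-- Basic concepts: concept names and unqualified existential restrictions `∃r` (with a
possibly inverse role `r`), the latter rendered as `∃r.⊤`. -/
inductive IsBasic : Concept → Prop
  | atom (A : CName) : IsBasic (Concept.atom A)
  | ex (r : Role) : IsBasic (Concept.ex r Concept.top)

/-- A `DL-Lite_core` axiom: `B ⊑ C` or `B ⊓ C ⊑ ⊥` with `B, C` basic concepts. -/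
def IsCoreAxiom (τ : Axiom) : Prop :=
  (∃ B C, τ = Axiom.ci B C ∧ IsBasic B ∧ IsBasic C) ∨
  (∃ B C, τ = Axiom.ci (Concept.conj B C) Concept.bot ∧ IsBasic B ∧ IsBasic C)

def IsDLLiteCore (T : Finset Axiom) : Prop := ∀ τ ∈ T, IsCoreAxiom τ

/-- Concepts built from basic concepts using `¬`, `⊓` (and hence also `⊔`). -/
inductive IsBoolConcept : Concept → Prop
  | basic {C} : IsBasic C → IsBoolConcept C
  | neg {C} : IsBoolConcept C → IsBoolConcept (Concept.neg C)
  | conj {C D} : IsBoolConcept C → IsBoolConcept D → IsBoolConcept (Concept.conj C D)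

/-- A `DL-Lite_bool^H` axiom: a concept inclusion between Boolean combinations of basic
concepts, or a role inclusion. -/
def IsBoolHAxiom (τ : Axiom) : Prop :=
  (∃ C D, τ = Axiom.ci C D ∧ IsBoolConcept C ∧ IsBoolConcept D) ∨ (∃ r s, τ = Axiom.ri r s)

def IsDLLiteBoolH (T : Finset Axiom) : Prop := ∀ τ ∈ T, IsBoolHAxiom τ

/-! Encoding of a finite undirected graph with vertex set `Fin nV`, given by an
orientation `E'` of its edge set: for each undirected edge `{u,v}`, exactly one of
`(u,v)`, `(v,u)` belongs to `E'`. -/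

/-- The role name `s_i` for a colour `s ∈ {r,g,b}` and `i ∈ {1,2}`. -/
def rn (s : Fin 3) (i : Fin 2) : RName := 2 * (s : ℕ) + (i : ℕ)

/-- The individual name of a vertex. -/
def vtxN (u : Fin nV') : IndName := (u : ℕ)

/-- The individual name of an (oriented) edge. -/
def edgN (nV : ℕ) (p : Fin nV × Fin nV) : IndName := nV + (p.1 : ℕ) * nV + (p.2 : ℕ)

/-- The basic concept `∃s_i`. -/
def exRn (s : Fin 3) (i : Fin 2) : Concept := Concept.ex (Role.name (rn s i)) Concept.top

/-- The basic concept `∃s_i⁻`. -/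
def exRnInv (s : Fin 3) (i : Fin 2) : Concept := Concept.ex (Role.inv (rn s i)) Concept.top

/-- The `DL-Lite_core` TBox: `∃s_i ⊓ ∃t_j ⊑ ⊥` for `s ≠ t`, and `∃s_1⁻ ⊓ ∃s_2⁻ ⊑ ⊥`. -/
def colTbox : Finset Axiom :=
  (((Finset.univ : Finset ((Fin 3 × Fin 2) × Fin 3 × Fin 2)).filter
      fun x => x.1.1 ≠ x.2.1).image
    fun x => Axiom.ci (Concept.conj (exRn x.1.1 x.1.2) (exRn x.2.1 x.2.2)) Concept.bot) ∪
  ((Finset.univ : Finset (Fin 3)).image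
    fun s => Axiom.ci (Concept.conj (exRnInv s 0) (exRnInv s 1)) Concept.bot)

/-- The ABox `A_G`: for each oriented edge `e = (u,v)` and each colour `s`, the
assertions `s_1(u, e)` and `s_2(v, e)`. -/
def colAbox (nV : ℕ) (E' : Finset (Fin nV × Fin nV)) : Finset Assertion :=
  ((E' ×ˢ (Finset.univ : Finset (Fin 3))).image
    fun x => Assertion.ra (rn x.2 0) (vtxN x.1.1) (edgN nV x.1)) ∪
  ((E' ×ˢ (Finset.univ : Finset (Fin 3))).image
    fun x => Assertion.ra (rn x.2 1) (vtxN x.1.2) (edgN nV x.1))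

/-! ### Auxiliary lemmas -/

lemma rn_inj {s t : Fin 3} {i j : Fin 2} (h : rn s i = rn t j) : s = t ∧ i = j := by
  unfold rn at h
  have h' : 2 * (s : ℕ) + (i : ℕ) = 2 * (t : ℕ) + (j : ℕ) := h
  have hs := s.isLt; have ht := t.isLt; have hi := i.isLt; have hj := j.isLt
  exact ⟨Fin.ext (by omega), Fin.ext (by omega)⟩

lemma rn_ne_01 {s t : Fin 3} (h : rn s 0 = rn t 1) : False := by
  have := (rn_inj h).2
  exact absurd this (by decide)

lemma edgN_inj {nV : ℕ} {p q : Fin nV × Fin nV} (h : edgN nV p = edgN nV q) : p = q := by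
  unfold edgN at h
  have hh : nV + (p.1 : ℕ) * nV + (p.2 : ℕ) = nV + (q.1 : ℕ) * nV + (q.2 : ℕ) := h
  have h2 := p.2.isLt; have h2' := q.2.isLt
  have hn : 0 < nV := by omega
  have h' : (p.1 : ℕ) * nV + (p.2 : ℕ) = (q.1 : ℕ) * nV + (q.2 : ℕ) := by omega
  have hdiv : ∀ a b : ℕ, b < nV → (a * nV + b) / nV = a := by
    intro a b hb
    rw [mul_comm, Nat.mul_add_div hn, Nat.div_eq_of_lt hb, add_zero]
  have ha : (p.1 : ℕ) = (q.1 : ℕ) := by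
    rw [← hdiv p.1 p.2 h2, ← hdiv q.1 q.2 h2', h']
  have hmul : (p.1 : ℕ) * nV = (q.1 : ℕ) * nV := by rw [ha]
  have hb : (p.2 : ℕ) = (q.2 : ℕ) := by omega
  exact Prod.ext (Fin.ext ha) (Fin.ext hb)

lemma colAbox_sum {M : Type*} [AddCommMonoid M] (nV : ℕ) (E' : Finset (Fin nV × Fin nV))
    (f : Assertion → M) :
    ∑ α ∈ colAbox nV E', f α = ∑ p ∈ E', ∑ s : Fin 3,
        (f (Assertion.ra (rn s 0) (vtxN p.1) (edgN nV p)) +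
         f (Assertion.ra (rn s 1) (vtxN p.2) (edgN nV p))) := by
  have hdisj : Disjoint
      ((E' ×ˢ (Finset.univ : Finset (Fin 3))).image
        fun x => Assertion.ra (rn x.2 0) (vtxN x.1.1) (edgN nV x.1))
      ((E' ×ˢ (Finset.univ : Finset (Fin 3))).image
        fun x => Assertion.ra (rn x.2 1) (vtxN x.1.2) (edgN nV x.1)) := by
    rw [Finset.disjoint_left]
    rintro a ha hb
    obtain ⟨x, -, rfl⟩ := Finset.mem_image.1 ha
    obtain ⟨y, -, h⟩ := Finset.mem_image.1 hb
    simp only [Assertion.ra.injEq] at h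
    exact rn_ne_01 h.1.symm
  have hinj1 : ∀ x ∈ E' ×ˢ (Finset.univ : Finset (Fin 3)),
      ∀ y ∈ E' ×ˢ (Finset.univ : Finset (Fin 3)),
      Assertion.ra (rn x.2 0) (vtxN x.1.1) (edgN nV x.1) =
        Assertion.ra (rn y.2 0) (vtxN y.1.1) (edgN nV y.1) → x = y := by
    intro x _ y _ h
    simp only [Assertion.ra.injEq] at h
    exact Prod.ext (edgN_inj h.2.2) ((rn_inj h.1).1)
  have hinj2 : ∀ x ∈ E' ×ˢ (Finset.univ : Finset (Fin 3)),
      ∀ y ∈ E' ×ˢ (Finset.univ : Finset (Fin 3)),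
      Assertion.ra (rn x.2 1) (vtxN x.1.2) (edgN nV x.1) =
        Assertion.ra (rn y.2 1) (vtxN y.1.2) (edgN nV y.1) → x = y := by
    intro x _ y _ h
    simp only [Assertion.ra.injEq] at h
    exact Prod.ext (edgN_inj h.2.2) ((rn_inj h.1).1)
  unfold colAbox
  rw [Finset.sum_union hdisj, Finset.sum_image hinj1, Finset.sum_image hinj2,
    ← Finset.sum_add_distrib, Finset.sum_product]

lemma tbox_mem1 (s t : Fin 3) (i j : Fin 2) (h : s ≠ t) :
    Axiom.ci (Concept.conj (exRn s i) (exRn t j)) Concept.bot ∈ colTbox := by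
  apply Finset.mem_union_left
  exact Finset.mem_image.2 ⟨((s, i), (t, j)), Finset.mem_filter.2 ⟨Finset.mem_univ _, h⟩, rfl⟩

lemma tbox_mem2 (s : Fin 3) :
    Axiom.ci (Concept.conj (exRnInv s 0) (exRnInv s 1)) Concept.bot ∈ colTbox := by
  apply Finset.mem_union_right
  exact Finset.mem_image.2 ⟨s, Finset.mem_univ _, rfl⟩

lemma mem_exRn {U : Type} {I : Interp U} {s : Fin 3} {i : Fin 2} {d : U} :
    d ∈ Concept.interp I (exRn s i) ↔ ∃ e, (d, e) ∈ I.rI (rn s i) := by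
  simp only [exRn, Concept.interp, Role.interp, Set.mem_setOf_eq]
  exact ⟨fun ⟨e, h, _⟩ => ⟨e, h⟩, fun ⟨e, h⟩ => ⟨e, h, (I.rI_sub _ _ h).2⟩⟩

lemma mem_exRnInv {U : Type} {I : Interp U} {s : Fin 3} {i : Fin 2} {d : U} :
    d ∈ Concept.interp I (exRnInv s i) ↔ ∃ e, (e, d) ∈ I.rI (rn s i) := by
  simp only [exRnInv, Concept.interp, Role.interp, Set.mem_setOf_eq]
  exact ⟨fun ⟨e, h, _⟩ => ⟨e, h⟩, fun ⟨e, h⟩ => ⟨e, h, (I.rI_sub _ _ h).1⟩⟩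

lemma vio_zero' {U : Type} {I : Interp U} {T : Finset Axiom} {k : ℕ}
    (h : ∑ τ' ∈ T, (⊤ : ℕ∞) * Axiom.vioCount I τ' ≤ (k : ℕ∞)) {τ : Axiom} (hτ : τ ∈ T) :
    Axiom.vioCount I τ = 0 := by
  by_contra hne
  have h1 : (⊤ : ℕ∞) ≤ ∑ τ' ∈ T, (⊤ : ℕ∞) * Axiom.vioCount I τ' := by
    refine le_trans (le_of_eq (WithTop.top_mul hne).symm) ?_
    exact Finset.single_le_sum (f := fun τ' => (⊤ : ℕ∞) * Axiom.vioCount I τ')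
      (fun _ _ => zero_le) hτ
  have h2 : ((k : ℕ∞)) = ⊤ := top_le_iff.1 (le_trans h1 h)
  exact absurd h2 (by simp)

lemma sum3_ge_two {P : Fin 3 → Prop} [DecidablePred P]
    (hsub : ∀ s t, P s → P t → s = t) :
    (2 : ℕ∞) ≤ ∑ s : Fin 3, (if P s then 0 else 1) := by
  rw [Fin.sum_univ_three]
  by_cases h0 : P 0 <;> by_cases h1 : P 1 <;> by_cases h2 : P 2 <;>
    first
      | exact absurd (hsub 0 1 h0 h1) (by decide)
      | exact absurd (hsub 0 2 h0 h2) (by decide)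
      | exact absurd (hsub 1 2 h1 h2) (by decide)
      | (simp only [if_pos, if_neg, h0, h1, h2, if_true, if_false]; norm_num)

lemma sum3_eq_three {P : Fin 3 → Prop} [DecidablePred P] (h : ∀ s, ¬ P s) :
    ∑ s : Fin 3, (if P s then (0 : ℕ∞) else 1) = 3 := by
  rw [Fin.sum_univ_three]
  simp only [if_neg (h 0), if_neg (h 1), if_neg (h 2)]
  norm_num

lemma sum3_eq_two (c : Fin 3) :
    ∑ s : Fin 3, (if s = c then (0 : ℕ∞) else 1) = 2 := by
  fin_cases c <;> simp [Fin.sum_univ_three]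
  all_goals norm_num

/-- A finite undirected graph `G` is 3-colourable iff the WKB
`(T, A_G)_ω` (with weight `∞` on every axiom and weight `1` on every assertion) is
`4|E|`-satisfiable. -/
theorem statement13 (nV : ℕ) (E' : Finset (Fin nV × Fin nV))
    (hloop : ∀ p ∈ E', p.1 ≠ p.2)
    (horient : ∀ p ∈ E', (p.2, p.1) ∉ E') :
    (∃ σ : Fin nV → Fin 3, ∀ p ∈ E', σ p.1 ≠ σ p.2) ↔
      ksat colTbox (colAbox nV E') (fun _ => ⊤) (fun _ => 1) (4 * E'.card) := by
  classical
  constructor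
  · -- forward: a 3-colouring gives a cheap interpretation
    rintro ⟨σ, hσ⟩
    let R : RName → Set (ℕ × ℕ) := fun n =>
      {q | ∃ p ∈ E', (n = rn (σ p.1) 0 ∧ q = (vtxN p.1, edgN nV p)) ∨
                      (n = rn (σ p.2) 1 ∧ q = (vtxN p.2, edgN nV p))}
    let I : Interp ℕ := ⟨Set.univ, id, fun _ => ∅, R,
      fun _ => Set.empty_subset _, fun _ _ _ => ⟨trivial, trivial⟩⟩
    refine ⟨ℕ, I, fun _ => trivial, ?_⟩
    have hsrc : ∀ (n : RName) (q : ℕ × ℕ), q ∈ I.rI n →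
        ∃ (u : Fin nV) (i : Fin 2), q.1 = vtxN u ∧ n = rn (σ u) i := by
      rintro n q ⟨p, hp, ⟨h1, rfl⟩ | ⟨h1, rfl⟩⟩
      · exact ⟨p.1, 0, rfl, h1⟩
      · exact ⟨p.2, 1, rfl, h1⟩
    have htgt : ∀ (n : RName) (q : ℕ × ℕ), q ∈ I.rI n →
        ∃ p, p ∈ E' ∧ q.2 = edgN nV p ∧ (n = rn (σ p.1) 0 ∨ n = rn (σ p.2) 1) := by
      rintro n q ⟨p, hp, ⟨h1, rfl⟩ | ⟨h1, rfl⟩⟩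
      · exact ⟨p, hp, rfl, Or.inl h1⟩
      · exact ⟨p, hp, rfl, Or.inr h1⟩
    have hT0 : ∀ τ ∈ colTbox, Axiom.vioCount I τ = 0 := by
      intro τ hτ
      rw [colTbox, Finset.mem_union] at hτ
      rcases hτ with h | h
      · obtain ⟨⟨⟨s, i⟩, ⟨t, j⟩⟩, hmem, rfl⟩ := Finset.mem_image.1 h
        have hst : s ≠ t := (Finset.mem_filter.1 hmem).2
        simp only [Axiom.vioCount]
        rw [Set.encard_eq_zero, Set.eq_empty_iff_forall_notMem]
        rintro d ⟨⟨hd1, hd2⟩, -⟩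
        obtain ⟨e, he⟩ := mem_exRn.1 hd1
        obtain ⟨e', he'⟩ := mem_exRn.1 hd2
        obtain ⟨u, i', hu, hn⟩ := hsrc _ _ he
        obtain ⟨u', j', hu', hn'⟩ := hsrc _ _ he'
        have huu : u = u' := Fin.ext (by
          have : vtxN u = vtxN u' := hu ▸ hu' ▸ rfl
          exact this)
        exact hst (((rn_inj hn).1).trans (huu ▸ ((rn_inj hn').1).symm))
      · obtain ⟨s, -, rfl⟩ := Finset.mem_image.1 h
        simp only [Axiom.vioCount]
        rw [Set.encard_eq_zero, Set.eq_empty_iff_forall_notMem]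
        rintro d ⟨⟨hd1, hd2⟩, -⟩
        obtain ⟨e, he⟩ := mem_exRnInv.1 hd1
        obtain ⟨e', he'⟩ := mem_exRnInv.1 hd2
        obtain ⟨p, hp, hd, hc⟩ := htgt _ _ he
        obtain ⟨p', hp', hd', hc'⟩ := htgt _ _ he'
        have hc1 : s = σ p.1 := by
          rcases hc with h1 | h1
          · exact (rn_inj h1).1
          · exact absurd h1 rn_ne_01
        have hc2 : s = σ p'.2 := by
          rcases hc' with h1 | h1
          · exact absurd h1.symm rn_ne_01
          · exact (rn_inj h1).1
        have hpp : p = p' := edgN_inj (by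
          have : edgN nV p = edgN nV p' := hd ▸ hd' ▸ rfl
          exact this)
        exact hσ p hp (hc1.symm.trans (hpp ▸ hc2))
    show (∑ τ ∈ colTbox, (⊤ : ℕ∞) * Axiom.vioCount I τ) +
        (∑ α ∈ colAbox nV E', if Assertion.sat I α then 0 else 1) ≤ ((4 * E'.card : ℕ) : ℕ∞)
    rw [Finset.sum_eq_zero (fun τ hτ => by rw [hT0 τ hτ, mul_zero]), zero_add,
      colAbox_sum nV E' (fun α => if Assertion.sat I α then (0 : ℕ∞) else 1)]
    have hsat1 : ∀ p ∈ E', ∀ s : Fin 3,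
        Assertion.sat I (Assertion.ra (rn s 0) (vtxN p.1) (edgN nV p)) ↔ s = σ p.1 := by
      intro p hp s
      constructor
      · rintro ⟨p', hp', ⟨h1, h2⟩ | ⟨h1, h2⟩⟩
        · have hpp : p = p' := edgN_inj (congrArg Prod.snd h2)
          exact (rn_inj h1).1.trans (by rw [hpp])
        · exact absurd h1 rn_ne_01
      · rintro rfl
        exact ⟨p, hp, Or.inl ⟨rfl, rfl⟩⟩
    have hsat2 : ∀ p ∈ E', ∀ s : Fin 3,
        Assertion.sat I (Assertion.ra (rn s 1) (vtxN p.2) (edgN nV p)) ↔ s = σ p.2 := by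
      intro p hp s
      constructor
      · rintro ⟨p', hp', ⟨h1, h2⟩ | ⟨h1, h2⟩⟩
        · exact absurd h1.symm rn_ne_01
        · have hpp : p = p' := edgN_inj (congrArg Prod.snd h2)
          exact (rn_inj h1).1.trans (by rw [hpp])
      · rintro rfl
        exact ⟨p, hp, Or.inr ⟨rfl, rfl⟩⟩
    have hmain : ∑ p ∈ E', ∑ s : Fin 3,
        ((if Assertion.sat I (Assertion.ra (rn s 0) (vtxN p.1) (edgN nV p)) then (0:ℕ∞) else 1) +
         (if Assertion.sat I (Assertion.ra (rn s 1) (vtxN p.2) (edgN nV p)) then (0:ℕ∞) else 1)) =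
        ∑ _p ∈ E', (4 : ℕ∞) := by
      refine Finset.sum_congr rfl fun p hp => ?_
      rw [Finset.sum_add_distrib]
      have e1 : ∑ s : Fin 3,
          (if Assertion.sat I (Assertion.ra (rn s 0) (vtxN p.1) (edgN nV p)) then (0:ℕ∞) else 1)
          = 2 := by
        rw [Finset.sum_congr rfl fun s _ => if_congr (hsat1 p hp s) rfl rfl]
        exact sum3_eq_two _
      have e2 : ∑ s : Fin 3,
          (if Assertion.sat I (Assertion.ra (rn s 1) (vtxN p.2) (edgN nV p)) then (0:ℕ∞) else 1)
          = 2 := by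
        rw [Finset.sum_congr rfl fun s _ => if_congr (hsat2 p hp s) rfl rfl]
        exact sum3_eq_two _
      rw [e1, e2]
      norm_num
    rw [hmain, Finset.sum_const, nsmul_eq_mul]
    rw [show ((4 * E'.card : ℕ) : ℕ∞) = (E'.card : ℕ∞) * 4 by push_cast; ring]
  · -- backward: a cheap interpretation yields a 3-colouring
    rintro ⟨U, I, hPr, hcost⟩
    have hcost' : (∑ τ ∈ colTbox, (⊤ : ℕ∞) * Axiom.vioCount I τ) +
        (∑ α ∈ colAbox nV E', if Assertion.sat I α then 0 else 1) ≤
          ((4 * E'.card : ℕ) : ℕ∞) := hcost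
    have hTle : ∑ τ ∈ colTbox, (⊤ : ℕ∞) * Axiom.vioCount I τ ≤ ((4 * E'.card : ℕ) : ℕ∞) :=
      le_trans (self_le_add_right _ _) hcost'
    have hvio : ∀ τ ∈ colTbox, Axiom.vioCount I τ = 0 := fun τ hτ => vio_zero' hTle hτ
    rw [Finset.sum_eq_zero (fun τ hτ => by rw [hvio τ hτ, mul_zero]), zero_add,
      colAbox_sum nV E' (fun α => if Assertion.sat I α then (0 : ℕ∞) else 1)] at hcost'
    -- semantic consequences of the TBox being satisfied
    have hdisj1 : ∀ (d : U) (s t : Fin 3) (i j : Fin 2), s ≠ t →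
        (∃ e, (d, e) ∈ I.rI (rn s i)) → (∃ e, (d, e) ∈ I.rI (rn t j)) → False := by
      intro d s t i j hst h1 h2
      have hz := hvio _ (tbox_mem1 s t i j hst)
      simp only [Axiom.vioCount] at hz
      rw [Set.encard_eq_zero, Set.eq_empty_iff_forall_notMem] at hz
      refine hz d ⟨⟨mem_exRn.2 h1, mem_exRn.2 h2⟩, ?_⟩
      simp [Concept.interp]
    have hdisj2 : ∀ (d : U) (s : Fin 3),
        (∃ e, (e, d) ∈ I.rI (rn s 0)) → (∃ e, (e, d) ∈ I.rI (rn s 1)) → False := by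
      intro d s h1 h2
      have hz := hvio _ (tbox_mem2 s)
      simp only [Axiom.vioCount] at hz
      rw [Set.encard_eq_zero, Set.eq_empty_iff_forall_notMem] at hz
      refine hz d ⟨⟨mem_exRnInv.2 h1, mem_exRnInv.2 h2⟩, ?_⟩
      simp [Concept.interp]
    have hsub1 : ∀ (p : Fin nV × Fin nV) (s t : Fin 3),
        Assertion.sat I (Assertion.ra (rn s 0) (vtxN p.1) (edgN nV p)) →
        Assertion.sat I (Assertion.ra (rn t 0) (vtxN p.1) (edgN nV p)) → s = t := by
      intro p s t h1 h2
      by_contra hst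
      exact hdisj1 (I.indI (vtxN p.1)) s t 0 0 hst ⟨_, h1⟩ ⟨_, h2⟩
    have hsub2 : ∀ (p : Fin nV × Fin nV) (s t : Fin 3),
        Assertion.sat I (Assertion.ra (rn s 1) (vtxN p.2) (edgN nV p)) →
        Assertion.sat I (Assertion.ra (rn t 1) (vtxN p.2) (edgN nV p)) → s = t := by
      intro p s t h1 h2
      by_contra hst
      exact hdisj1 (I.indI (vtxN p.2)) s t 1 1 hst ⟨_, h1⟩ ⟨_, h2⟩
    -- every edge must have a satisfied assertion of each kind
    have key : ∀ p ∈ E',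
        (∃ s, Assertion.sat I (Assertion.ra (rn s 0) (vtxN p.1) (edgN nV p))) ∧
        (∃ s, Assertion.sat I (Assertion.ra (rn s 1) (vtxN p.2) (edgN nV p))) := by
      intro p0 hp0
      by_contra hcon
      set F : Fin nV × Fin nV → ℕ∞ := fun p => ∑ s : Fin 3,
        ((if Assertion.sat I (Assertion.ra (rn s 0) (vtxN p.1) (edgN nV p)) then (0:ℕ∞) else 1) +
         (if Assertion.sat I (Assertion.ra (rn s 1) (vtxN p.2) (edgN nV p)) then (0:ℕ∞) else 1))
        with hF
      have hge4 : ∀ p ∈ E', (4 : ℕ∞) ≤ F p := by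
        intro p _
        rw [hF]
        simp only
        rw [Finset.sum_add_distrib]
        have g1 := sum3_ge_two (P := fun s =>
          Assertion.sat I (Assertion.ra (rn s 0) (vtxN p.1) (edgN nV p))) (hsub1 p)
        have g2 := sum3_ge_two (P := fun s =>
          Assertion.sat I (Assertion.ra (rn s 1) (vtxN p.2) (edgN nV p))) (hsub2 p)
        calc (4 : ℕ∞) = 2 + 2 := by norm_num
          _ ≤ _ := add_le_add g1 g2
      have hge5 : (5 : ℕ∞) ≤ F p0 := by
        rw [hF]
        simp only
        rw [Finset.sum_add_distrib]
        rcases not_and_or.mp hcon with h | h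
        · push_neg at h
          have e3 := sum3_eq_three (P := fun s =>
            Assertion.sat I (Assertion.ra (rn s 0) (vtxN p0.1) (edgN nV p0))) h
          have g2 := sum3_ge_two (P := fun s =>
            Assertion.sat I (Assertion.ra (rn s 1) (vtxN p0.2) (edgN nV p0))) (hsub2 p0)
          calc (5 : ℕ∞) = 3 + 2 := by norm_num
            _ ≤ _ := add_le_add (le_of_eq e3.symm) g2
        · push_neg at h
          have e3 := sum3_eq_three (P := fun s =>
            Assertion.sat I (Assertion.ra (rn s 1) (vtxN p0.2) (edgN nV p0))) h
          have g1 := sum3_ge_two (P := fun s =>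
            Assertion.sat I (Assertion.ra (rn s 0) (vtxN p0.1) (edgN nV p0))) (hsub1 p0)
          calc (5 : ℕ∞) = 2 + 3 := by norm_num
            _ ≤ _ := add_le_add g1 (le_of_eq e3.symm)
      have hsum : ∑ p ∈ E', F p ≤ ((4 * E'.card : ℕ) : ℕ∞) := hcost'
      have hsplit : F p0 + ∑ p ∈ E'.erase p0, F p = ∑ p ∈ E', F p :=
        Finset.add_sum_erase _ F hp0
      have herase : ((E'.card - 1 : ℕ) : ℕ∞) * 4 ≤ ∑ p ∈ E'.erase p0, F p := by
        calc ((E'.card - 1 : ℕ) : ℕ∞) * 4 = ((E'.erase p0).card : ℕ∞) * 4 := by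
              rw [Finset.card_erase_of_mem hp0]
          _ = ∑ _p ∈ E'.erase p0, (4 : ℕ∞) := by rw [Finset.sum_const, nsmul_eq_mul]
          _ ≤ ∑ p ∈ E'.erase p0, F p :=
              Finset.sum_le_sum fun p hp => hge4 p (Finset.mem_of_mem_erase hp)
      have hbig : (5 : ℕ∞) + ((E'.card - 1 : ℕ) : ℕ∞) * 4 ≤ ((4 * E'.card : ℕ) : ℕ∞) := by
        calc (5 : ℕ∞) + ((E'.card - 1 : ℕ) : ℕ∞) * 4 ≤ F p0 + ∑ p ∈ E'.erase p0, F p :=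
              add_le_add hge5 herase
          _ = ∑ p ∈ E', F p := hsplit
          _ ≤ _ := hsum
      have hnat : 5 + (E'.card - 1) * 4 ≤ 4 * E'.card := by exact_mod_cast hbig
      have hpos : 0 < E'.card := Finset.card_pos.2 ⟨p0, hp0⟩
      omega
    -- extract the colouring
    have hsubC : ∀ (u : Fin nV) (s t : Fin 3) (i j : Fin 2),
        (∃ e, (I.indI (vtxN u), e) ∈ I.rI (rn s i)) →
        (∃ e, (I.indI (vtxN u), e) ∈ I.rI (rn t j)) → s = t := by
      intro u s t i j h1 h2
      by_contra hst
      exact hdisj1 _ s t i j hst h1 h2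
    let Col : Fin nV → Fin 3 → Prop := fun u s =>
      ∃ i : Fin 2, ∃ e, (I.indI (vtxN u), e) ∈ I.rI (rn s i)
    let σ : Fin nV → Fin 3 := fun u => if h : ∃ s, Col u s then h.choose else 0
    have hσspec : ∀ u s, Col u s → σ u = s := by
      intro u s hs
      have hex : ∃ s, Col u s := ⟨s, hs⟩
      have h1 : Col u (σ u) := by
        have hd : σ u = hex.choose := dif_pos hex
        rw [hd]
        exact hex.choose_spec
      obtain ⟨i, e, hi⟩ := h1
      obtain ⟨j, e', hj⟩ := hs
      exact hsubC u _ s i j ⟨e, hi⟩ ⟨e', hj⟩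
    refine ⟨σ, ?_⟩
    intro p hp
    obtain ⟨⟨s, hs⟩, ⟨t, ht⟩⟩ := key p hp
    have h1 : σ p.1 = s := hσspec p.1 s ⟨0, I.indI (edgN nV p), hs⟩
    have h2 : σ p.2 = t := hσspec p.2 t ⟨1, I.indI (edgN nV p), ht⟩
    rw [h1, h2]
    intro hst
    exact hdisj2 (I.indI (edgN nV p)) s ⟨_, hs⟩ ⟨_, hst ▸ ht⟩

end DL
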